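/- Let c > 0 and d ≥ 1 be given. Let (u,v) and (ū,v̄) be two bounded classical solutions of the system ∂u/∂t = Δu + (2c(1−u)+1)v − u, ∂v/∂t = Δv + (c(u−v)−2)v on [0,∞)×ℝ^d, both taking values in ℛ = {(u,v) ∈ ℝ² : 0 ≤ v ≤ u ≤ 1}. If u(0,x) ≤ ū(0,x) and v(0,x) ≤ v̄(0,x) for all x ∈ ℝ^d, then u(t,x) ≤ ū(t,x) and v(t,x) ≤ v̄(t,x) for all t ≥ 0 and all x ∈ ℝ^d. -/

import Mathlib

open Set

/-- Pointwise time derivative of `u : ℝ → (Fin d → ℝ) → ℝ`. -/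
noncomputable def timeDeriv {d : ℕ} (u : ℝ → (Fin d → ℝ) → ℝ) (t : ℝ) (x : Fin d → ℝ) : ℝ :=
  deriv (fun τ => u τ x) t

/-- Pointwise spatial Laplacian `Δu = ∑ i ∂²u/∂xᵢ²`. -/
noncomputable def lapl {d : ℕ} (u : ℝ → (Fin d → ℝ) → ℝ) (t : ℝ) (x : Fin d → ℝ) : ℝ :=
  ∑ i : Fin d, iteratedDeriv 2 (fun s => u t (Function.update x i s)) (x i)

/-- A bounded classical solution on `[0,∞) × ℝ^d` of the system
`∂u/∂t = Δu + (2c(1−u)+1)v − u`, `∂v/∂t = Δv + (c(u−v)−2)v`: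
both functions are bounded, continuous on `[0,∞) × ℝ^d`, C¹ in `t` and C² in `x`
for `t > 0`, and satisfy the system pointwise for `t > 0`. -/
structure IsBddClassicalSol (d : ℕ) (c : ℝ) (u v : ℝ → (Fin d → ℝ) → ℝ) : Prop where
  bdd_u : ∃ C, ∀ t x, |u t x| ≤ C
  bdd_v : ∃ C, ∀ t x, |v t x| ≤ C
  cont_u : ContinuousOn (fun p : ℝ × (Fin d → ℝ) => u p.1 p.2) (Ici 0 ×ˢ univ)
  cont_v : ContinuousOn (fun p : ℝ × (Fin d → ℝ) => v p.1 p.2) (Ici 0 ×ˢ univ)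
  t_reg_u : ∀ x, ContDiffOn ℝ 1 (fun τ => u τ x) (Ioi 0)
  t_reg_v : ∀ x, ContDiffOn ℝ 1 (fun τ => v τ x) (Ioi 0)
  x_reg_u : ∀ t, 0 < t → ContDiff ℝ 2 (fun x => u t x)
  x_reg_v : ∀ t, 0 < t → ContDiff ℝ 2 (fun x => v t x)
  eq_u : ∀ t, 0 < t → ∀ x,
    timeDeriv u t x = lapl u t x + (2 * c * (1 - u t x) + 1) * v t x - u t x
  eq_v : ∀ t, 0 < t → ∀ x,
    timeDeriv v t x = lapl v t x + (c * (u t x - v t x) - 2) * v t x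

section AuxComparison
open Filter Topology

lemma derivNonposLeft {f : ℝ → ℝ} {a : ℝ} (hf : DifferentiableAt ℝ f a)
    (h : ∀ᶠ t in 𝓝[<] a, f a ≤ f t) : deriv f a ≤ 0 := by
  have H : Tendsto (slope f a) (𝓝[<] a) (𝓝 (deriv f a)) :=
    (hasDerivAt_iff_tendsto_slope.mp hf.hasDerivAt).mono_left
      (nhdsWithin_mono a fun x hx => ne_of_lt hx)
  refine le_of_tendsto H ?_
  filter_upwards [h, self_mem_nhdsWithin] with t ht ht'
  rw [slope_def_field]
  have : t < a := ht'
  apply div_nonpos_of_nonneg_of_nonpos (by linarith) (by linarith)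

lemma secondDerivNonneg {g : ℝ → ℝ} (hg : ContDiff ℝ 2 g) {a : ℝ}
    (hmin : ∀ s, g a ≤ g s) : 0 ≤ iteratedDeriv 2 g a := by
  rw [iteratedDeriv_succ, iteratedDeriv_one]
  by_contra hneg
  push_neg at hneg
  have hdiff : Differentiable ℝ g := hg.differentiable (by norm_num)
  have hg' : Differentiable ℝ (deriv g) := by
    have h2 : ContDiff ℝ ((1 : WithTop ℕ∞) + 1) g := by
      have e : ((1 : WithTop ℕ∞) + 1) = 2 := by norm_num
      rw [e]; exact hg
    exact (contDiff_succ_iff_deriv.mp h2).2.2.differentiable one_ne_zero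
  have hda : deriv g a = 0 :=
    (IsLocalMin.deriv_eq_zero (Filter.Eventually.of_forall hmin))
  have Hslope : Tendsto (slope (deriv g) a) (𝓝[<] a) (𝓝 (deriv (deriv g) a)) :=
    (hasDerivAt_iff_tendsto_slope.mp (hg' a).hasDerivAt).mono_left
      (nhdsWithin_mono a fun x hx => ne_of_lt hx)
  have hev : ∀ᶠ t in 𝓝[<] a, slope (deriv g) a t < 0 :=
    Hslope.eventually_lt_const hneg
  have hev2 : ∀ᶠ t in 𝓝[<] a, 0 < deriv g t := by
    filter_upwards [hev, self_mem_nhdsWithin] with t ht ht'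
    have ht'' : t < a := ht'
    rw [slope_def_field, hda, sub_zero] at ht
    by_contra hle
    push_neg at hle
    exact absurd (div_nonneg_iff.mpr (Or.inr ⟨hle, by linarith⟩)) (not_le.mpr ht)
  obtain ⟨l, hl, hsub⟩ := mem_nhdsLT_iff_exists_Ioo_subset.mp hev2
  have hla : l < a := hl
  have hmono : StrictMonoOn g (Icc l a) := by
    apply strictMonoOn_of_deriv_pos (convex_Icc l a) hdiff.continuous.continuousOn
    intro t ht
    rw [interior_Icc] at ht
    exact hsub ht
  have h1 : (l + a) / 2 ∈ Icc l a := ⟨by linarith, by linarith⟩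
  have h2 : a ∈ Icc l a := ⟨le_of_lt hla, le_rfl⟩
  have := hmono h1 h2 (by linarith)
  exact absurd (hmin ((l + a) / 2)) (not_le.mpr this)

lemma iteratedDeriv_two_add_sub {a b q : ℝ → ℝ} (ha : ContDiff ℝ 2 a) (hb : ContDiff ℝ 2 b)
    (hq : ContDiff ℝ 2 q) (s : ℝ) :
    iteratedDeriv 2 (fun t => a t - b t + q t) s =
      iteratedDeriv 2 a s - iteratedDeriv 2 b s + iteratedDeriv 2 q s := by
  have h1 : (fun t => a t - b t + q t) = ((a - b) + q) := by funext t; simp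
  rw [h1, ← iteratedDerivWithin_univ, ← iteratedDerivWithin_univ, ← iteratedDerivWithin_univ,
    ← iteratedDerivWithin_univ,
    iteratedDerivWithin_add (mem_univ s) uniqueDiffOn_univ
      (show ContDiffWithinAt ℝ 2 (a - b) univ s from (ha.sub hb).contDiffWithinAt) hq.contDiffWithinAt,
    iteratedDerivWithin_sub (mem_univ s) uniqueDiffOn_univ
      ha.contDiffWithinAt hb.contDiffWithinAt]

lemma deriv2_quadratic (E A : ℝ) :
    iteratedDeriv 2 (fun s : ℝ => E * (1 + (s ^ 2 + A))) = fun _ => 2 * E := by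
  rw [iteratedDeriv_succ, iteratedDeriv_one]
  have h1 : deriv (fun s : ℝ => E * (1 + (s ^ 2 + A))) = fun s => E * (2 * s) := by
    funext s
    have h : HasDerivAt (fun s : ℝ => E * (1 + (s ^ 2 + A))) (E * (2 * s)) s := by
      have hs : HasDerivAt (fun s : ℝ => 1 + (s ^ 2 + A)) (2 * s) s := by
        simpa using (((hasDerivAt_pow 2 s).add_const A).const_add 1)
      exact hs.const_mul E
    exact h.deriv
  rw [h1]
  funext s
  have h : HasDerivAt (fun s : ℝ => E * (2 * s)) (2 * E) s := by
    simpa [mul_comm] using ((hasDerivAt_id s).const_mul 2).const_mul E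
  exact h.deriv

lemma sectionContDiff {d : ℕ} {f : (Fin d → ℝ) → ℝ} (hf : ContDiff ℝ 2 f)
    (x : Fin d → ℝ) (i : Fin d) :
    ContDiff ℝ 2 (fun s => f (Function.update x i s)) :=
  hf.comp (contDiff_update 2 x i)

noncomputable def QQ (d : ℕ) : (Fin d → ℝ) → ℝ := fun x => 1 + ∑ i, x i ^ 2

noncomputable def WW (d : ℕ) (K ε : ℝ) (f g : ℝ → (Fin d → ℝ) → ℝ) :
    ℝ → (Fin d → ℝ) → ℝ :=
  fun t x => f t x - g t x + ε * Real.exp (K * t) * QQ d x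

lemma QQ_cont (d : ℕ) : Continuous (QQ d) := by
  unfold QQ
  exact continuous_const.add (continuous_finset_sum _ fun i _ => (continuous_apply i).pow 2)

lemma QQ_contDiff (d : ℕ) : ContDiff ℝ 2 (QQ d) := by
  unfold QQ
  exact contDiff_const.add (ContDiff.sum fun i _ =>
    ((ContinuousLinearMap.proj i : (Fin d → ℝ) →L[ℝ] ℝ).contDiff).pow 2)

lemma QQ_ge_one (d : ℕ) (x : Fin d → ℝ) : 1 ≤ QQ d x := by
  unfold QQ
  have : (0:ℝ) ≤ ∑ i, x i ^ 2 := Finset.sum_nonneg fun i _ => sq_nonneg _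
  linarith

lemma QQ_ge_sq (d : ℕ) (x : Fin d → ℝ) (i : Fin d) : x i ^ 2 ≤ QQ d x := by
  unfold QQ
  have h := Finset.single_le_sum (f := fun j => x j ^ 2) (fun j _ => sq_nonneg _)
    (Finset.mem_univ i)
  linarith

lemma QQ_update {d : ℕ} (x : Fin d → ℝ) (i : Fin d) (s : ℝ) :
    QQ d (Function.update x i s) = 1 + (s ^ 2 + ∑ j ∈ Finset.univ.erase i, x j ^ 2) := by
  unfold QQ
  have h : ∀ j, (Function.update x i s j) ^ 2
      = Function.update (fun j => x j ^ 2) i (s ^ 2) j := by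
    intro j; rcases eq_or_ne j i with rfl | h
    · simp
    · simp [Function.update_of_ne h]
  rw [show (∑ j, Function.update x i s j ^ 2)
      = ∑ j, Function.update (fun j => x j ^ 2) i (s ^ 2) j from
    Finset.sum_congr rfl fun j _ => h j]
  rw [Finset.sum_update_of_mem (Finset.mem_univ i)]
  simp [Finset.erase_eq]

lemma quadratic_contDiff (E A : ℝ) : ContDiff ℝ 2 (fun s : ℝ => E * (1 + (s ^ 2 + A))) :=
  contDiff_const.mul (contDiff_const.add ((contDiff_id.pow 2).add contDiff_const))

lemma contWW {d : ℕ} (K ε : ℝ) {f g : ℝ → (Fin d → ℝ) → ℝ}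
    (hf : ContinuousOn (fun p : ℝ × (Fin d → ℝ) => f p.1 p.2) (Ici 0 ×ˢ univ))
    (hg : ContinuousOn (fun p : ℝ × (Fin d → ℝ) => g p.1 p.2) (Ici 0 ×ˢ univ)) :
    ContinuousOn (fun p : ℝ × (Fin d → ℝ) => WW d K ε f g p.1 p.2) (Ici 0 ×ˢ univ) := by
  unfold WW
  refine (hf.sub hg).add (Continuous.continuousOn ?_)
  exact (continuous_const.mul
    (Real.continuous_exp.comp (continuous_const.mul continuous_fst))).mul
    ((QQ_cont d).comp continuous_snd)

lemma normBound {d : ℕ} {K ε : ℝ} (hK : 0 ≤ K) (hε : 0 < ε)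
    {f g : ℝ → (Fin d → ℝ) → ℝ} {t : ℝ} {x : Fin d → ℝ} (ht : 0 ≤ t)
    (hfg : -1 ≤ f t x - g t x) (hW : WW d K ε f g t x ≤ 0) :
    ‖x‖ ≤ Real.sqrt (1 / ε) := by
  unfold WW at hW
  have hexp : 1 ≤ Real.exp (K * t) := Real.one_le_exp (by positivity)
  have hQ1 : 1 ≤ QQ d x := QQ_ge_one d x
  have hbound : ε * QQ d x ≤ 1 := by nlinarith
  rw [pi_norm_le_iff_of_nonneg (Real.sqrt_nonneg _)]
  intro i
  have hsq : x i ^ 2 ≤ 1 / ε := by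
    have := QQ_ge_sq d x i
    rw [le_div_iff₀ hε]
    nlinarith
  rw [Real.norm_eq_abs, ← Real.sqrt_sq_eq_abs]
  exact Real.sqrt_le_sqrt hsq

lemma laplSectionNonneg {d : ℕ} {f : (Fin d → ℝ) → ℝ} (hf : ContDiff ℝ 2 f)
    {x : Fin d → ℝ} (hmin : ∀ y, f x ≤ f y) (i : Fin d) :
    0 ≤ iteratedDeriv 2 (fun s => f (Function.update x i s)) (x i) := by
  apply secondDerivNonneg (sectionContDiff hf x i)
  intro s
  simpa [Function.update_eq_self] using hmin (Function.update x i s)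
lemma key (d : ℕ) (c : ℝ) (hc : 0 < c)
    (u v ubar vbar : ℝ → (Fin d → ℝ) → ℝ)
    (hsol : IsBddClassicalSol d c u v) (hsolbar : IsBddClassicalSol d c ubar vbar)
    (hR : ∀ t, 0 ≤ t → ∀ x, 0 ≤ v t x ∧ v t x ≤ u t x ∧ u t x ≤ 1)
    (hRbar : ∀ t, 0 ≤ t → ∀ x, 0 ≤ vbar t x ∧ vbar t x ≤ ubar t x ∧ ubar t x ≤ 1)
    (hinit : ∀ x, u 0 x ≤ ubar 0 x ∧ v 0 x ≤ vbar 0 x)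
    (ε : ℝ) (hε : 0 < ε) :
    ∀ t, 0 ≤ t → ∀ x, 0 < WW d (2 * d + 2 * c + 1) ε ubar u t x ∧
      0 < WW d (2 * d + 2 * c + 1) ε vbar v t x := by
  set K : ℝ := 2 * d + 2 * c + 1 with hKdef
  have hK0 : (0:ℝ) ≤ K := by positivity
  by_contra hcon
  push_neg at hcon
  obtain ⟨t₁, ht₁0, x₁, hx₁⟩ := hcon
  -- min at the bad point is ≤ 0
  have hmin₁ : min (WW d K ε ubar u t₁ x₁) (WW d K ε vbar v t₁ x₁) ≤ 0 := by
    rcases le_or_gt (WW d K ε ubar u t₁ x₁) 0 with h | h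
    · exact min_le_of_left_le h
    · exact min_le_of_right_le (hx₁ h)
  set G : ℝ × (Fin d → ℝ) → ℝ :=
    fun p => min (WW d K ε ubar u p.1 p.2) (WW d K ε vbar v p.1 p.2) with hGdef
  set S : Set ℝ := {t | t ∈ Icc 0 t₁ ∧ ∃ x, G (t, x) ≤ 0} with hSdef
  have hSne : t₁ ∈ S := ⟨⟨ht₁0, le_rfl⟩, x₁, hmin₁⟩
  have hSbdd : BddBelow S := ⟨0, fun t ht => ht.1.1⟩
  set t₀ : ℝ := sInf S with ht₀def
  have ht₀0 : 0 ≤ t₀ := le_csInf ⟨t₁, hSne⟩ fun t ht => ht.1.1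
  have ht₀le : t₀ ≤ t₁ := csInf_le hSbdd hSne
  -- a sequence in S converging to t₀
  have hseq : ∀ n : ℕ, ∃ t, t ∈ S ∧ t < t₀ + 1 / (n + 1) := by
    intro n
    obtain ⟨a, ha, hlt⟩ := exists_lt_of_csInf_lt ⟨t₁, hSne⟩
      (show sInf S < t₀ + 1 / (n + 1) by
        rw [← ht₀def]; have : (0:ℝ) < 1 / (n+1) := by positivity
        linarith)
    exact ⟨a, ha, hlt⟩
  choose ts hts hlt using hseq
  have hts0 : ∀ n, 0 ≤ ts n := fun n => (hts n).1.1
  have htsge : ∀ n, t₀ ≤ ts n := fun n => csInf_le hSbdd (hts n)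
  have htst : Tendsto ts atTop (𝓝 t₀) := by
    have hup : Tendsto (fun n : ℕ => t₀ + 1 / (n + 1)) atTop (𝓝 (t₀ + 0)) :=
      tendsto_const_nhds.add tendsto_one_div_add_atTop_nhds_zero_nat
    rw [add_zero] at hup
    exact tendsto_of_tendsto_of_tendsto_of_le_of_le tendsto_const_nhds hup
      htsge fun n => (hlt n).le
  choose xs hxs using fun n => (hts n).2
  -- the bad points live in a compact ball
  set R : ℝ := Real.sqrt (1 / ε) with hRdef
  have hxsball : ∀ n, xs n ∈ Metric.closedBall (0 : Fin d → ℝ) R := by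
    intro n
    rw [Metric.mem_closedBall, dist_zero_right]
    have h := hxs n
    have h1 : -1 ≤ ubar (ts n) (xs n) - u (ts n) (xs n) := by
      have h2 := hR (ts n) (hts0 n) (xs n)
      have h3 := hRbar (ts n) (hts0 n) (xs n)
      linarith [h3.1, h3.2.1, h2.2.2]
    have h1' : -1 ≤ vbar (ts n) (xs n) - v (ts n) (xs n) := by
      have h2 := hR (ts n) (hts0 n) (xs n)
      have h3 := hRbar (ts n) (hts0 n) (xs n)
      linarith [h3.1, h2.2.1, h2.2.2]
    rcases min_le_iff.mp h with h | h
    · exact normBound hK0 hε (hts0 n) h1 h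
    · exact normBound hK0 hε (hts0 n) h1' h
  obtain ⟨x₀, hx₀B, φ, hφ, hφtend⟩ :=
    (isCompact_closedBall (0 : Fin d → ℝ) R).tendsto_subseq hxsball
  have hGcont : ContinuousOn G (Ici 0 ×ˢ univ) := fun p hp =>
    ((contWW K ε hsolbar.cont_u hsol.cont_u) p hp).min
      ((contWW K ε hsolbar.cont_v hsol.cont_v) p hp)
  have hpair : Tendsto (fun n => (ts (φ n), xs (φ n))) atTop (𝓝 (t₀, x₀)) :=
    ((htst.comp hφ.tendsto_atTop).prodMk_nhds hφtend)
  have hmem : (t₀, x₀) ∈ Ici 0 ×ˢ (univ : Set (Fin d → ℝ)) := ⟨ht₀0, mem_univ _⟩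
  have hpair' : Tendsto (fun n => (ts (φ n), xs (φ n))) atTop
      (𝓝[Ici 0 ×ˢ (univ : Set (Fin d → ℝ))] (t₀, x₀)) :=
    tendsto_nhdsWithin_of_tendsto_nhds_of_eventually_within _ hpair
      (Eventually.of_forall fun n => ⟨hts0 _, mem_univ _⟩)
  have hGlim : Tendsto (fun n => G (ts (φ n), xs (φ n))) atTop (𝓝 (G (t₀, x₀))) :=
    (hGcont (t₀, x₀) hmem).tendsto.comp hpair'
  have hGt₀x₀ : G (t₀, x₀) ≤ 0 :=
    le_of_tendsto hGlim (Eventually.of_forall fun n => hxs (φ n))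
  -- positivity at time 0
  have hzero : ∀ x : Fin d → ℝ, 0 < WW d K ε ubar u 0 x ∧ 0 < WW d K ε vbar v 0 x := by
    intro x
    have h1 := (hinit x).1
    have h2 := (hinit x).2
    have hQ := QQ_ge_one d x
    have hexp : Real.exp (K * 0) = 1 := by rw [mul_zero, Real.exp_zero]
    constructor <;> · unfold WW; rw [hexp]; nlinarith
  -- t₀ is positive
  have ht₀pos : 0 < t₀ := by
    rcases ht₀0.lt_or_eq with h | h
    · exact h
    · exfalso
      have h0 := hzero x₀
      have : 0 < G (t₀, x₀) := by
        rw [hGdef, ← h]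
        exact lt_min h0.1 h0.2
      linarith
  -- before t₀ everything is positive
  have hpre : ∀ t, 0 ≤ t → t < t₀ → ∀ x,
      0 < WW d K ε ubar u t x ∧ 0 < WW d K ε vbar v t x := by
    intro t ht0 htlt x
    by_contra hcontra
    have hmle : G (t, x) ≤ 0 := by
      rcases le_or_gt (WW d K ε ubar u t x) 0 with h | h
      · exact min_le_of_left_le h
      · rcases le_or_gt (WW d K ε vbar v t x) 0 with h' | h'
        · exact min_le_of_right_le h'
        · exact absurd ⟨h, h'⟩ hcontra
    have htS : t ∈ S := ⟨⟨ht0, htlt.le.trans ht₀le⟩, x, hmle⟩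
    exact absurd (csInf_le hSbdd htS) (not_le.mpr htlt)
  -- at t₀ everything is nonnegative
  have hat : ∀ x, 0 ≤ WW d K ε ubar u t₀ x ∧ 0 ≤ WW d K ε vbar v t₀ x := by
    intro x
    have hmemx : (t₀, x) ∈ Ici 0 ×ˢ (univ : Set (Fin d → ℝ)) := ⟨ht₀0, mem_univ _⟩
    have hmapc : ContinuousWithinAt (fun t : ℝ => ((t, x) : ℝ × (Fin d → ℝ))) (Ici 0) t₀ :=
      (continuous_id.prodMk continuous_const).continuousWithinAt
    have hc1 : ContinuousWithinAt (fun t => G (t, x)) (Ici 0) t₀ :=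
      ContinuousWithinAt.comp (x := t₀) (f := fun t : ℝ => ((t, x) : ℝ × (Fin d → ℝ)))
        (hGcont (t₀, x) hmemx) hmapc fun t ht => ⟨ht, mem_univ _⟩
    have hne : (𝓝[Ioo 0 t₀] t₀).NeBot := by
      rw [← mem_closure_iff_nhdsWithin_neBot, closure_Ioo (ne_of_lt ht₀pos)]
      exact ⟨ht₀0, le_rfl⟩
    have htt : Tendsto (fun t => G (t, x)) (𝓝[Ioo 0 t₀] t₀) (𝓝 (G (t₀, x))) :=
      hc1.tendsto.mono_left (nhdsWithin_mono _ fun s hs => hs.1.le)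
    have hge : 0 ≤ G (t₀, x) := by
      refine ge_of_tendsto htt ?_
      filter_upwards [self_mem_nhdsWithin] with t ht
      have h := hpre t ht.1.le ht.2 x
      exact le_min h.1.le h.2.le
    exact le_min_iff.mp hge
  have hG0 : G (t₀, x₀) = 0 :=
    le_antisymm hGt₀x₀ (le_min (hat x₀).1 (hat x₀).2)
  have hG0' : min (WW d K ε ubar u t₀ x₀) (WW d K ε vbar v t₀ x₀) = 0 := hG0
  have hWZ : WW d K ε ubar u t₀ x₀ = 0 ∨ WW d K ε vbar v t₀ x₀ = 0 := by
    rcases min_cases (WW d K ε ubar u t₀ x₀) (WW d K ε vbar v t₀ x₀) with ⟨h1, _⟩ | ⟨h1, _⟩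
    · left; rw [h1] at hG0'; exact hG0'
    · right; rw [h1] at hG0'; exact hG0'
  -- common analytic facts at (t₀, x₀)
  have hx_reg_ubar := hsolbar.x_reg_u t₀ ht₀pos
  have hx_reg_u := hsol.x_reg_u t₀ ht₀pos
  have hx_reg_vbar := hsolbar.x_reg_v t₀ ht₀pos
  have hx_reg_v := hsol.x_reg_v t₀ ht₀pos
  have hdiffubar : DifferentiableAt ℝ (fun τ => ubar τ x₀) t₀ :=
    ((hsolbar.t_reg_u x₀).differentiableOn one_ne_zero).differentiableAt
      (isOpen_Ioi.mem_nhds ht₀pos)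
  have hdiffu : DifferentiableAt ℝ (fun τ => u τ x₀) t₀ :=
    ((hsol.t_reg_u x₀).differentiableOn one_ne_zero).differentiableAt
      (isOpen_Ioi.mem_nhds ht₀pos)
  have hdiffvbar : DifferentiableAt ℝ (fun τ => vbar τ x₀) t₀ :=
    ((hsolbar.t_reg_v x₀).differentiableOn one_ne_zero).differentiableAt
      (isOpen_Ioi.mem_nhds ht₀pos)
  have hdiffv : DifferentiableAt ℝ (fun τ => v τ x₀) t₀ :=
    ((hsol.t_reg_v x₀).differentiableOn one_ne_zero).differentiableAt
      (isOpen_Ioi.mem_nhds ht₀pos)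
  have hexpD : HasDerivAt (fun τ => ε * Real.exp (K * τ) * QQ d x₀)
      (ε * (Real.exp (K * t₀) * K) * QQ d x₀) t₀ := by
    have h1 : HasDerivAt (fun τ : ℝ => K * τ) K t₀ := by
      simpa using (hasDerivAt_id t₀).const_mul K
    exact (h1.exp.const_mul ε).mul_const (QQ d x₀)
  have hQx₀ : 1 ≤ QQ d x₀ := QQ_ge_one d x₀
  obtain ⟨hV0, hVU, hU1⟩ := hR t₀ ht₀0 x₀
  obtain ⟨hVb0, hVbUb, hUb1⟩ := hRbar t₀ ht₀0 x₀
  have hequbar := hsolbar.eq_u t₀ ht₀pos x₀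
  have hequ := hsol.eq_u t₀ ht₀pos x₀
  have heqvbar := hsolbar.eq_v t₀ ht₀pos x₀
  have heqv := hsol.eq_v t₀ ht₀pos x₀
  simp only [timeDeriv] at hequbar hequ heqvbar heqv
  rcases hWZ with hW0 | hZ0
  · -- case W : the u-component barrier touches zero
    have hW0' : ubar t₀ x₀ - u t₀ x₀ + ε * Real.exp (K * t₀) * QQ d x₀ = 0 := hW0
    have hZnn' : 0 ≤ vbar t₀ x₀ - v t₀ x₀ + ε * Real.exp (K * t₀) * QQ d x₀ := (hat x₀).2
    set F : (Fin d → ℝ) → ℝ :=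
      fun y => ubar t₀ y - u t₀ y + ε * Real.exp (K * t₀) * QQ d y with hFdef
    have hFC2 : ContDiff ℝ 2 F :=
      (hx_reg_ubar.sub hx_reg_u).add (contDiff_const.mul (QQ_contDiff d))
    have hFmin : ∀ y, F x₀ ≤ F y := by
      intro y
      have h1 : F x₀ = 0 := hW0
      have h2 : (0:ℝ) ≤ F y := (hat y).1
      linarith
    have hL : 0 ≤ ∑ i : Fin d,
        iteratedDeriv 2 (fun s => F (Function.update x₀ i s)) (x₀ i) :=
      Finset.sum_nonneg fun i _ => laplSectionNonneg hFC2 hFmin i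
    have hdecomp : ∀ i : Fin d,
        iteratedDeriv 2 (fun s => F (Function.update x₀ i s)) (x₀ i)
          = iteratedDeriv 2 (fun s => ubar t₀ (Function.update x₀ i s)) (x₀ i)
            - iteratedDeriv 2 (fun s => u t₀ (Function.update x₀ i s)) (x₀ i)
            + 2 * (ε * Real.exp (K * t₀)) := by
      intro i
      have hfun : (fun s => F (Function.update x₀ i s))
          = fun s => ubar t₀ (Function.update x₀ i s) - u t₀ (Function.update x₀ i s)
              + ε * Real.exp (K * t₀)
                * (1 + (s ^ 2 + ∑ j ∈ Finset.univ.erase i, x₀ j ^ 2)) := by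
        funext s
        rw [hFdef]
        simp only [QQ_update]
      rw [hfun, iteratedDeriv_two_add_sub
        (a := fun s => ubar t₀ (Function.update x₀ i s))
        (b := fun s => u t₀ (Function.update x₀ i s))
        (q := fun s => ε * Real.exp (K * t₀)
          * (1 + (s ^ 2 + ∑ j ∈ Finset.univ.erase i, x₀ j ^ 2)))
        (sectionContDiff hx_reg_ubar x₀ i) (sectionContDiff hx_reg_u x₀ i)
        (quadratic_contDiff _ _)]
      simp only [deriv2_quadratic]
    have hsum : (∑ i : Fin d,
        iteratedDeriv 2 (fun s => F (Function.update x₀ i s)) (x₀ i))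
        = lapl ubar t₀ x₀ - lapl u t₀ x₀ + d * (2 * (ε * Real.exp (K * t₀))) := by
      rw [Finset.sum_congr rfl fun i _ => hdecomp i]
      rw [Finset.sum_add_distrib, Finset.sum_sub_distrib, Finset.sum_const, Finset.card_univ,
        Fintype.card_fin, nsmul_eq_mul]
      simp only [lapl]
    have hWt : HasDerivAt (fun τ => ubar τ x₀ - u τ x₀ + ε * Real.exp (K * τ) * QQ d x₀)
        (deriv (fun τ => ubar τ x₀) t₀ - deriv (fun τ => u τ x₀) t₀
          + ε * (Real.exp (K * t₀) * K) * QQ d x₀) t₀ :=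
      (hdiffubar.hasDerivAt.sub hdiffu.hasDerivAt).add hexpD
    have hder0 : deriv (fun τ => ubar τ x₀) t₀ - deriv (fun τ => u τ x₀) t₀
        + ε * (Real.exp (K * t₀) * K) * QQ d x₀ ≤ 0 := by
      rw [← hWt.deriv]
      apply derivNonposLeft hWt.differentiableAt
      filter_upwards [Ioo_mem_nhdsLT_of_mem (show t₀ ∈ Ioc 0 t₀ from ⟨ht₀pos, le_rfl⟩)]
        with t ht
      have h1 : (0:ℝ) < ubar t x₀ - u t x₀ + ε * Real.exp (K * t) * QQ d x₀ :=
        (hpre t ht.1.le ht.2 x₀).1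
      linarith [hW0']
    -- arithmetic contradiction
    set E : ℝ := ε * Real.exp (K * t₀) with hEdef
    have hEpos : 0 < E := by rw [hEdef]; positivity
    set P : ℝ := E * QQ d x₀ with hPdef
    have hQpos : (0:ℝ) < QQ d x₀ := lt_of_lt_of_le one_pos hQx₀
    have hPpos : 0 < P := by rw [hPdef]; exact mul_pos hEpos hQpos
    have hEleP : E ≤ P := by
      rw [hPdef]
      calc E = E * 1 := (mul_one E).symm
        _ ≤ E * QQ d x₀ := mul_le_mul_of_nonneg_left hQx₀ hEpos.le
    have hKP : ε * (Real.exp (K * t₀) * K) * QQ d x₀ = K * P := by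
      rw [hPdef, hEdef]; ring
    rw [hKP] at hder0
    have hKPexp : K * P = 2 * (d:ℝ) * P + 2 * c * P + P := by rw [hKdef]; ring
    have hUeq : u t₀ x₀ = ubar t₀ x₀ + P := by linarith [hW0']
    have hbracket : (2 * c * (1 - ubar t₀ x₀) + 1) * vbar t₀ x₀
        - (2 * c * (1 - u t₀ x₀) + 1) * v t₀ x₀
        = (2 * c * (1 - ubar t₀ x₀) + 1) * (vbar t₀ x₀ - v t₀ x₀ + P)
          - (2 * c * (1 - ubar t₀ x₀) + 1) * P + 2 * c * P * v t₀ x₀ := by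
      rw [hUeq]; ring
    have hb1 : 0 ≤ (2 * c * (1 - ubar t₀ x₀) + 1) * (vbar t₀ x₀ - v t₀ x₀ + P) :=
      mul_nonneg (by
        have := mul_nonneg hc.le (show (0:ℝ) ≤ 1 - ubar t₀ x₀ by linarith)
        linarith) hZnn'
    have hb2 : (2 * c * (1 - ubar t₀ x₀) + 1) * P ≤ (2 * c + 1) * P := by
      have h := mul_le_mul_of_nonneg_right
        (show 2 * c * (1 - ubar t₀ x₀) + 1 ≤ 2 * c + 1 by
          have := mul_nonneg hc.le (show (0:ℝ) ≤ ubar t₀ x₀ by linarith)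
          linarith) hPpos.le
      linarith
    have hb3 : 0 ≤ 2 * c * P * v t₀ x₀ :=
      mul_nonneg (mul_nonneg (by linarith) hPpos.le) hV0
    have hdE : 2 * (d:ℝ) * E ≤ 2 * d * P :=
      mul_le_mul_of_nonneg_left hEleP (by positivity)
    linarith [hder0, hequbar, hequ, hsum, hL, hbracket, hb1, hb2, hb3, hdE, hKPexp, hPpos]
  · -- case Z : the v-component barrier touches zero
    have hZ0' : vbar t₀ x₀ - v t₀ x₀ + ε * Real.exp (K * t₀) * QQ d x₀ = 0 := hZ0
    have hWnn' : 0 ≤ ubar t₀ x₀ - u t₀ x₀ + ε * Real.exp (K * t₀) * QQ d x₀ := (hat x₀).1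
    set F : (Fin d → ℝ) → ℝ :=
      fun y => vbar t₀ y - v t₀ y + ε * Real.exp (K * t₀) * QQ d y with hFdef
    have hFC2 : ContDiff ℝ 2 F :=
      (hx_reg_vbar.sub hx_reg_v).add (contDiff_const.mul (QQ_contDiff d))
    have hFmin : ∀ y, F x₀ ≤ F y := by
      intro y
      have h1 : F x₀ = 0 := hZ0
      have h2 : (0:ℝ) ≤ F y := (hat y).2
      linarith
    have hL : 0 ≤ ∑ i : Fin d,
        iteratedDeriv 2 (fun s => F (Function.update x₀ i s)) (x₀ i) :=
      Finset.sum_nonneg fun i _ => laplSectionNonneg hFC2 hFmin i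
    have hdecomp : ∀ i : Fin d,
        iteratedDeriv 2 (fun s => F (Function.update x₀ i s)) (x₀ i)
          = iteratedDeriv 2 (fun s => vbar t₀ (Function.update x₀ i s)) (x₀ i)
            - iteratedDeriv 2 (fun s => v t₀ (Function.update x₀ i s)) (x₀ i)
            + 2 * (ε * Real.exp (K * t₀)) := by
      intro i
      have hfun : (fun s => F (Function.update x₀ i s))
          = fun s => vbar t₀ (Function.update x₀ i s) - v t₀ (Function.update x₀ i s)
              + ε * Real.exp (K * t₀)
                * (1 + (s ^ 2 + ∑ j ∈ Finset.univ.erase i, x₀ j ^ 2)) := by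
        funext s
        rw [hFdef]
        simp only [QQ_update]
      rw [hfun, iteratedDeriv_two_add_sub
        (a := fun s => vbar t₀ (Function.update x₀ i s))
        (b := fun s => v t₀ (Function.update x₀ i s))
        (q := fun s => ε * Real.exp (K * t₀)
          * (1 + (s ^ 2 + ∑ j ∈ Finset.univ.erase i, x₀ j ^ 2)))
        (sectionContDiff hx_reg_vbar x₀ i) (sectionContDiff hx_reg_v x₀ i)
        (quadratic_contDiff _ _)]
      simp only [deriv2_quadratic]
    have hsum : (∑ i : Fin d,
        iteratedDeriv 2 (fun s => F (Function.update x₀ i s)) (x₀ i))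
        = lapl vbar t₀ x₀ - lapl v t₀ x₀ + d * (2 * (ε * Real.exp (K * t₀))) := by
      rw [Finset.sum_congr rfl fun i _ => hdecomp i]
      rw [Finset.sum_add_distrib, Finset.sum_sub_distrib, Finset.sum_const, Finset.card_univ,
        Fintype.card_fin, nsmul_eq_mul]
      simp only [lapl]
    have hWt : HasDerivAt (fun τ => vbar τ x₀ - v τ x₀ + ε * Real.exp (K * τ) * QQ d x₀)
        (deriv (fun τ => vbar τ x₀) t₀ - deriv (fun τ => v τ x₀) t₀
          + ε * (Real.exp (K * t₀) * K) * QQ d x₀) t₀ :=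
      (hdiffvbar.hasDerivAt.sub hdiffv.hasDerivAt).add hexpD
    have hder0 : deriv (fun τ => vbar τ x₀) t₀ - deriv (fun τ => v τ x₀) t₀
        + ε * (Real.exp (K * t₀) * K) * QQ d x₀ ≤ 0 := by
      rw [← hWt.deriv]
      apply derivNonposLeft hWt.differentiableAt
      filter_upwards [Ioo_mem_nhdsLT_of_mem (show t₀ ∈ Ioc 0 t₀ from ⟨ht₀pos, le_rfl⟩)]
        with t ht
      have h1 : (0:ℝ) < vbar t x₀ - v t x₀ + ε * Real.exp (K * t) * QQ d x₀ :=
        (hpre t ht.1.le ht.2 x₀).2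
      linarith [hZ0']
    set E : ℝ := ε * Real.exp (K * t₀) with hEdef
    have hEpos : 0 < E := by rw [hEdef]; positivity
    set P : ℝ := E * QQ d x₀ with hPdef
    have hQpos : (0:ℝ) < QQ d x₀ := lt_of_lt_of_le one_pos hQx₀
    have hPpos : 0 < P := by rw [hPdef]; exact mul_pos hEpos hQpos
    have hEleP : E ≤ P := by
      rw [hPdef]
      calc E = E * 1 := (mul_one E).symm
        _ ≤ E * QQ d x₀ := mul_le_mul_of_nonneg_left hQx₀ hEpos.le
    have hKP : ε * (Real.exp (K * t₀) * K) * QQ d x₀ = K * P := by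
      rw [hPdef, hEdef]; ring
    rw [hKP] at hder0
    have hKPexp : K * P = 2 * (d:ℝ) * P + 2 * c * P + P := by rw [hKdef]; ring
    have hVeq : v t₀ x₀ = vbar t₀ x₀ + P := by linarith [hZ0']
    have hbracket : (c * (ubar t₀ x₀ - vbar t₀ x₀) - 2) * vbar t₀ x₀
        - (c * (u t₀ x₀ - v t₀ x₀) - 2) * v t₀ x₀
        = c * vbar t₀ x₀ * (ubar t₀ x₀ - u t₀ x₀ + P) - c * vbar t₀ x₀ * P
          - c * u t₀ x₀ * P + 2 * c * vbar t₀ x₀ * P + c * P ^ 2 + 2 * P := by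
      rw [hVeq]; ring
    have hb1 : 0 ≤ c * vbar t₀ x₀ * (ubar t₀ x₀ - u t₀ x₀ + P) :=
      mul_nonneg (mul_nonneg hc.le hVb0) hWnn'
    have hb2 : c * vbar t₀ x₀ * P ≤ c * P := by
      have h1 : c * vbar t₀ x₀ ≤ c * 1 := mul_le_mul_of_nonneg_left (by linarith) hc.le
      have h2 := mul_le_mul_of_nonneg_right h1 hPpos.le
      linarith
    have hb3 : c * u t₀ x₀ * P ≤ c * P := by
      have h1 : c * u t₀ x₀ ≤ c * 1 := mul_le_mul_of_nonneg_left (by linarith) hc.le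
      have h2 := mul_le_mul_of_nonneg_right h1 hPpos.le
      linarith
    have hb4 : 0 ≤ 2 * c * vbar t₀ x₀ * P :=
      mul_nonneg (mul_nonneg (by linarith) hVb0) hPpos.le
    have hb5 : 0 ≤ c * P ^ 2 := by positivity
    have hdE : 2 * (d:ℝ) * E ≤ 2 * d * P :=
      mul_le_mul_of_nonneg_left hEleP (by positivity)
    linarith [hder0, heqvbar, heqv, hsum, hL, hbracket, hb1, hb2, hb3, hb4, hb5, hdE,
      hKPexp, hPpos]

end AuxComparison

/-- Monotonicity (in initial data) of the PDE system (15) for solutions taking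
values in `ℛ = {(u,v) : 0 ≤ v ≤ u ≤ 1}`. -/
theorem stmt0 (d : ℕ) (hd : 1 ≤ d) (c : ℝ) (hc : 0 < c)
    (u v ubar vbar : ℝ → (Fin d → ℝ) → ℝ)
    (hsol : IsBddClassicalSol d c u v) (hsolbar : IsBddClassicalSol d c ubar vbar)
    (hR : ∀ t, 0 ≤ t → ∀ x, 0 ≤ v t x ∧ v t x ≤ u t x ∧ u t x ≤ 1)
    (hRbar : ∀ t, 0 ≤ t → ∀ x, 0 ≤ vbar t x ∧ vbar t x ≤ ubar t x ∧ ubar t x ≤ 1)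
    (hinit : ∀ x, u 0 x ≤ ubar 0 x ∧ v 0 x ≤ vbar 0 x) :
    ∀ t, 0 ≤ t → ∀ x, u t x ≤ ubar t x ∧ v t x ≤ vbar t x := by
  intro t ht x
  have hkey := key d c hc u v ubar vbar hsol hsolbar hR hRbar hinit
  have hB : (0:ℝ) < Real.exp ((2 * (d:ℝ) + 2 * c + 1) * t) * QQ d x :=
    mul_pos (Real.exp_pos _) (lt_of_lt_of_le one_pos (QQ_ge_one d x))
  constructor
  · by_contra h
    push_neg at h
    have hδ : 0 < u t x - ubar t x := by linarith
    have hε : 0 < (u t x - ubar t x)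
        / (2 * (Real.exp ((2 * (d:ℝ) + 2 * c + 1) * t) * QQ d x)) :=
      div_pos hδ (by linarith)
    have h2 : 0 < ubar t x - u t x
        + ((u t x - ubar t x)
            / (2 * (Real.exp ((2 * (d:ℝ) + 2 * c + 1) * t) * QQ d x)))
          * Real.exp ((2 * (d:ℝ) + 2 * c + 1) * t) * QQ d x :=
      (hkey _ hε t ht x).1
    have h3 : ((u t x - ubar t x)
            / (2 * (Real.exp ((2 * (d:ℝ) + 2 * c + 1) * t) * QQ d x)))
          * Real.exp ((2 * (d:ℝ) + 2 * c + 1) * t) * QQ d x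
        = (u t x - ubar t x) / 2 := by
      field_simp
      have hQ0 : QQ d x ≠ 0 := (lt_of_lt_of_le one_pos (QQ_ge_one d x)).ne'; field_simp
    rw [h3] at h2
    linarith
  · by_contra h
    push_neg at h
    have hδ : 0 < v t x - vbar t x := by linarith
    have hε : 0 < (v t x - vbar t x)
        / (2 * (Real.exp ((2 * (d:ℝ) + 2 * c + 1) * t) * QQ d x)) :=
      div_pos hδ (by linarith)
    have h2 : 0 < vbar t x - v t x
        + ((v t x - vbar t x)
            / (2 * (Real.exp ((2 * (d:ℝ) + 2 * c + 1) * t) * QQ d x)))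
          * Real.exp ((2 * (d:ℝ) + 2 * c + 1) * t) * QQ d x :=
      (hkey _ hε t ht x).2
    have h3 : ((v t x - vbar t x)
            / (2 * (Real.exp ((2 * (d:ℝ) + 2 * c + 1) * t) * QQ d x)))
          * Real.exp ((2 * (d:ℝ) + 2 * c + 1) * t) * QQ d x
        = (v t x - vbar t x) / 2 := by
      field_simp
      have hQ0 : QQ d x ≠ 0 := (lt_of_lt_of_le one_pos (QQ_ge_one d x)).ne'; field_simp
    rw [h3] at h2
    linarith
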